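/- Let K = Frac(R) for a DVR R with uniformizer π and valuation v, and let A ∈ GL_n(K) have Smith normal form A = U·diag(π^{μ₁},…,π^{μ_n})·V with U,V ∈ GL_n(R) and μ₁ ≥ … ≥ μ_n. Let λ₁ ≥ … ≥ λ_n be integers. Then the following are equivalent: (a) for every 1 ≤ i ≤ n every i×i minor of A has valuation ≥ λ_{n−i+1} + … + λ_n, and v(det A) = λ₁ + … + λ_n; (b) μ ≼ λ in the dominance order, i.e. Σ_{j≤i} μ_j ≤ Σ_{j≤i} λ_j for all i with equality for i = n. -/

import Mathlib

open Finset Matrix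

/-- Expansion of the determinant of a product of rectangular matrices:
minors live on the right factor, entries on the left. -/
lemma det_mul_expansion {K : Type*} [CommRing K] {i n : ℕ}
    (X : Matrix (Fin i) (Fin n) K) (Y : Matrix (Fin n) (Fin i) K) :
    (X * Y).det = ∑ κ : Fin i → Fin n, (∏ a, X a (κ a)) * (Y.submatrix κ id).det := by
  have h : (X * Y) = Matrix.of fun a => ∑ k, X a k • Y k := by
    ext a b; simp [Matrix.mul_apply, Finset.sum_apply]
  rw [h]
  have h2 : Matrix.det (Matrix.of fun a => ∑ k, X a k • Y k)
      = (Matrix.detRowAlternating : (Fin i → K) [⋀^Fin i]→ₗ[K] K).toMultilinearMap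
          (fun a => ∑ k, X a k • Y k) := rfl
  rw [h2, MultilinearMap.map_sum]
  refine Finset.sum_congr rfl fun κ _ => ?_
  rw [MultilinearMap.map_smul_univ]
  rfl

/-- The valuation of a finite product is the sum of valuations. -/
lemma val_prod {K : Type*} [Field K] (v : AddValuation K (WithTop ℤ)) {ι : Type*} (s : Finset ι)
    (F : ι → K) : v (∏ a ∈ s, F a) = ∑ a ∈ s, v (F a) := by
  classical
  induction s using Finset.cons_induction with
  | empty => simp
  | cons a s ha ih => rw [Finset.prod_cons, Finset.sum_cons, v.map_mul, ih]

lemma val_unit {R : Type*} [CommRing R] {K : Type*} [Field K] [Algebra R K]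
    (v : AddValuation K (WithTop ℤ))
    (hv0 : ∀ r : R, 0 ≤ v (algebraMap R K r)) {r : R} (hr : IsUnit r) :
    v (algebraMap R K r) = 0 := by
  obtain ⟨u, rfl⟩ := hr
  have h1 : v (algebraMap R K (u : R)) + v (algebraMap R K ((u⁻¹ : Rˣ) : R)) = 0 := by
    rw [← v.map_mul, ← _root_.map_mul]
    simp
  have h2 := hv0 (u : R)
  have h3 := hv0 ((u⁻¹ : Rˣ) : R)
  refine le_antisymm ?_ h2
  calc v (algebraMap R K (u : R))
      ≤ v (algebraMap R K (u : R)) + v (algebraMap R K ((u⁻¹ : Rˣ) : R)) :=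
        le_add_of_nonneg_right h3
    _ = 0 := h1

lemma val_zpow {R : Type*} [CommRing R] {K : Type*} [Field K] [Algebra R K]
    (v : AddValuation K (WithTop ℤ)) {π : R}
    (hvπ : v (algebraMap R K π) = 1) (m : ℤ) :
    v ((algebraMap R K π) ^ m) = (m : WithTop ℤ) := by
  have hnat : ∀ p : ℕ, v ((algebraMap R K π) ^ (p : ℕ)) = ((p : ℤ) : WithTop ℤ) := by
    intro p
    rw [v.map_pow, hvπ]
    simp [nsmul_eq_mul]
  induction m using Int.rec with
  | ofNat p => rw [Int.ofNat_eq_natCast, zpow_natCast]; exact_mod_cast hnat p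
  | negSucc p =>
      rw [zpow_negSucc, AddValuation.map_inv, hnat (p + 1)]
      push_cast
      rw [Int.negSucc_eq]
      push_cast
      rfl

lemma strictMono_le_bound {i n : ℕ} {g : Fin i → Fin n} (hg : StrictMono g) (a : Fin i) :
    (g a : ℕ) ≤ n - i + a := by
  have key : ∀ d (h : (a : ℕ) + d < i), (g a : ℕ) + d ≤ (g ⟨a + d, h⟩ : ℕ) := by
    intro d
    induction d with
    | zero => intro h; simp
    | succ d ih =>
        intro h
        have h' : (a : ℕ) + d < i := by omega
        have hlt : (⟨(a : ℕ) + d, h'⟩ : Fin i) < ⟨(a : ℕ) + (d + 1), h⟩ := by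
          simp [Fin.lt_def]
        have h1 := hg hlt
        have h2 := ih h'
        rw [Fin.lt_def] at h1
        omega
  have ha : (a : ℕ) < i := a.isLt
  have h1 : (a : ℕ) + (i - 1 - a) < i := by omega
  have h2 := key (i - 1 - (a : ℕ)) h1
  have h3 : ((g ⟨(a : ℕ) + (i - 1 - a), h1⟩ : Fin n) : ℕ) < n := Fin.isLt _
  omega

/-- The sum over the "tail" filter equals the sum over the canonical tail embedding. -/
lemma tail_sum_eq {n i : ℕ} (hin : i ≤ n) (x : Fin n → ℤ) :
    ∑ j ∈ Finset.univ.filter (fun j : Fin n => n - i ≤ (j : ℕ)), x j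
      = ∑ a : Fin i, x ⟨n - i + a, by have := a.isLt; omega⟩ := by
  classical
  have hi1 : ∀ a : Fin i, n - i + (a : ℕ) < n := fun a => by have := a.isLt; omega
  set t : Fin i → Fin n := fun a => ⟨n - i + a, hi1 a⟩ with ht
  have htinj : Function.Injective t := by
    intro a b hab
    simp only [ht, Fin.mk.injEq] at hab
    exact Fin.ext (by omega)
  have hT : Finset.univ.filter (fun j : Fin n => n - i ≤ (j : ℕ))
      = Finset.image t Finset.univ := by
    ext j
    simp only [mem_filter, mem_univ, true_and, mem_image]
    constructor
    · intro hj
      have hj2 := j.isLt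
      refine ⟨⟨(j : ℕ) - (n - i), by omega⟩, Fin.ext ?_⟩
      simp [ht]; omega
    · rintro ⟨a, rfl⟩
      simp [ht]
  rw [hT, Finset.sum_image (fun a _ b _ h => htinj h)]

lemma antitone_tail_sum_le {n i : ℕ} (hin : i ≤ n) (μ : Fin n → ℤ) (hμ : Antitone μ)
    (f : Fin i → Fin n) (hf : Function.Injective f) :
    ∑ j ∈ Finset.univ.filter (fun j : Fin n => n - i ≤ (j : ℕ)), μ j ≤ ∑ a, μ (f a) := by
  classical
  rw [tail_sum_eq hin]
  set s : Finset (Fin n) := Finset.image f Finset.univ with hs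
  have hcard : s.card = i := by
    rw [hs, Finset.card_image_of_injective _ hf, Finset.card_univ, Fintype.card_fin]
  have hsum : ∑ a, μ (f a) = ∑ j ∈ s, μ j := (Finset.sum_image (fun a _ b _ h => hf h)).symm
  have himg : Finset.image (fun a => s.orderEmbOfFin hcard a) Finset.univ = s := by
    apply Finset.coe_injective
    rw [Finset.coe_image, Finset.coe_univ, Set.image_univ, Finset.range_orderEmbOfFin]
  have hsum2 : ∑ j ∈ s, μ j = ∑ a, μ (s.orderEmbOfFin hcard a) := by
    conv_lhs => rw [← himg]
    rw [Finset.sum_image (fun a _ b _ h => (s.orderEmbOfFin hcard).injective h)]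
  rw [hsum, hsum2]
  apply Finset.sum_le_sum
  intro a _
  apply hμ
  rw [Fin.le_def]
  exact strictMono_le_bound (s.orderEmbOfFin hcard).strictMono a

lemma diag_minor_bound {K : Type*} [Field K] (v : AddValuation K (WithTop ℤ))
    {π' : K} (hz : ∀ m : ℤ, v (π' ^ m) = (m : WithTop ℤ))
    {n i : ℕ} (hin : i ≤ n) (μ : Fin n → ℤ) (hμ : Antitone μ) (f g : Fin i → Fin n) :
    ((∑ j ∈ Finset.univ.filter (fun j : Fin n => n - i ≤ (j : ℕ)), μ j : ℤ) : WithTop ℤ) ≤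
      v (((Matrix.diagonal fun j => π' ^ (μ j)).submatrix f g).det) := by
  classical
  by_cases hf : Function.Injective f
  · rw [Matrix.det_apply']
    apply v.map_le_sum
    intro σ _
    rw [v.map_mul]
    have hsign : v (((Equiv.Perm.sign σ : ℤ) : K)) = 0 := by
      rcases Int.units_eq_one_or (Equiv.Perm.sign σ) with h | h <;> rw [h] <;> simp
    rw [hsign, zero_add, val_prod]
    calc ((∑ j ∈ Finset.univ.filter (fun j : Fin n => n - i ≤ (j : ℕ)), μ j : ℤ) : WithTop ℤ)
        ≤ ((∑ a, μ (f (σ a)) : ℤ) : WithTop ℤ) := by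
          exact_mod_cast antitone_tail_sum_le hin μ hμ (f ∘ σ) (hf.comp σ.injective)
      _ = ∑ a, ((μ (f (σ a)) : WithTop ℤ)) := by push_cast; rfl
      _ ≤ ∑ a, v (((Matrix.diagonal fun j => π' ^ (μ j)).submatrix f g) (σ a) a) := by
          apply Finset.sum_le_sum
          intro a _
          rw [Matrix.submatrix_apply]
          by_cases hfg : f (σ a) = g a
          · rw [← hfg, Matrix.diagonal_apply_eq, hz]
          · rw [Matrix.diagonal_apply_ne _ hfg, v.map_zero]
            exact le_top
  · rw [Function.not_injective_iff] at hf
    obtain ⟨a, b, hab, hne⟩ := hf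
    have hdet : ((Matrix.diagonal fun j => π' ^ (μ j)).submatrix f g).det = 0 := by
      apply Matrix.det_zero_of_row_eq hne
      funext c
      simp [Matrix.submatrix_apply, hab]
    rw [hdet, v.map_zero]
    exact le_top

lemma left_mul_bound {R : Type*} [CommRing R] {K : Type*} [Field K] [Algebra R K]
    (v : AddValuation K (WithTop ℤ)) (hv0 : ∀ r : R, 0 ≤ v (algebraMap R K r))
    {n i : ℕ} (W : Matrix (Fin n) (Fin n) R) (B : Matrix (Fin n) (Fin n) K) (c : WithTop ℤ)
    (hB : ∀ f g : Fin i → Fin n, c ≤ v ((B.submatrix f g).det)) (f g : Fin i → Fin n) :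
    c ≤ v (((W.map (algebraMap R K) * B).submatrix f g).det) := by
  rw [Matrix.submatrix_mul _ _ f id g Function.bijective_id, det_mul_expansion]
  apply v.map_le_sum
  intro κ _
  rw [v.map_mul, Matrix.submatrix_submatrix]
  have h1 : 0 ≤ v (∏ a, (W.map (algebraMap R K)).submatrix f id a (κ a)) := by
    rw [val_prod]
    apply Finset.sum_nonneg
    intro a _
    simpa using hv0 _
  calc c ≤ v ((B.submatrix (id ∘ κ) (g ∘ id)).det) := hB _ _
    _ ≤ _ := le_add_of_nonneg_left h1

lemma right_mul_bound {R : Type*} [CommRing R] {K : Type*} [Field K] [Algebra R K]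
    (v : AddValuation K (WithTop ℤ)) (hv0 : ∀ r : R, 0 ≤ v (algebraMap R K r))
    {n i : ℕ} (W : Matrix (Fin n) (Fin n) R) (B : Matrix (Fin n) (Fin n) K) (c : WithTop ℤ)
    (hB : ∀ f g : Fin i → Fin n, c ≤ v ((B.submatrix f g).det)) (f g : Fin i → Fin n) :
    c ≤ v (((B * W.map (algebraMap R K)).submatrix f g).det) := by
  have key := left_mul_bound (i := i) v hv0 Wᵀ Bᵀ c
    (fun f g => by rw [← Matrix.transpose_submatrix, Matrix.det_transpose]; exact hB g f) g f
  rw [← Matrix.det_transpose, Matrix.transpose_submatrix, Matrix.transpose_mul,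
    ← Matrix.transpose_map]
  exact key

/-- Let `R` be a DVR with uniformizer `π` and normalized valuation `v` on `K = Frac R`,
and let `A ∈ GL_n(K)` have Smith normal form `A = U · diag(π^{μ₁},…,π^{μ_n}) · V` with
`U, V ∈ GL_n(R)` and `μ₁ ≥ … ≥ μ_n`. For integers `λ₁ ≥ … ≥ λ_n` the following are
equivalent: (a) every `i × i` minor of `A` has valuation `≥ λ_{n-i+1} + … + λ_n` and
`v (det A) = λ₁ + … + λ_n`; (b) `μ ≼ λ` in the dominance order. -/
theorem bounded_iff_dominance_order
    {R : Type*} [CommRing R] [IsDomain R] [IsDiscreteValuationRing R]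
    (K : Type*) [Field K] [Algebra R K] [IsFractionRing R K]
    (π : R) (hπ : Irreducible π)
    (v : AddValuation K (WithTop ℤ))
    (hv0 : ∀ r : R, 0 ≤ v (algebraMap R K r))
    (hvπ : v (algebraMap R K π) = 1)
    {n : ℕ} (μ : Fin n → ℤ) (hμ : Antitone μ) (lam : Fin n → ℤ) (hlam : Antitone lam)
    (U V : Matrix (Fin n) (Fin n) R) (hU : IsUnit U.det) (hV : IsUnit V.det)
    (A : Matrix (Fin n) (Fin n) K)
    (hA : A = U.map ⇑(algebraMap R K) *
        Matrix.diagonal (fun i => (algebraMap R K π) ^ (μ i)) * V.map ⇑(algebraMap R K)) :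
    ((∀ i : ℕ, 1 ≤ i → i ≤ n → ∀ f g : Fin i → Fin n,
        ((∑ j ∈ Finset.univ.filter (fun j : Fin n => n - i ≤ (j : ℕ)), lam j : ℤ) : WithTop ℤ) ≤
          v ((A.submatrix f g).det)) ∧
      v A.det = ((∑ j, lam j : ℤ) : WithTop ℤ)) ↔
    ((∀ i : ℕ, 1 ≤ i → i ≤ n →
        ∑ j ∈ Finset.univ.filter (fun j : Fin n => (j : ℕ) < i), μ j ≤
          ∑ j ∈ Finset.univ.filter (fun j : Fin n => (j : ℕ) < i), lam j) ∧
      ∑ j, μ j = ∑ j, lam j) := by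
  classical
  have hz : ∀ m : ℤ, v ((algebraMap R K π) ^ m) = (m : WithTop ℤ) := val_zpow v hvπ
  set D : Matrix (Fin n) (Fin n) K :=
    Matrix.diagonal (fun j => (algebraMap R K π) ^ (μ j)) with hD
  -- all i×i minors of A have valuation at least the tail sum of μ
  have hAminor : ∀ i : ℕ, i ≤ n → ∀ f g : Fin i → Fin n,
      ((∑ j ∈ Finset.univ.filter (fun j : Fin n => n - i ≤ (j : ℕ)), μ j : ℤ) : WithTop ℤ) ≤
        v ((A.submatrix f g).det) := by
    intro i hin f g
    rw [hA]
    exact right_mul_bound v hv0 V _ _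
      (fun f g => left_mul_bound v hv0 U D _
        (fun f g => diag_minor_bound v hz hin μ hμ f g) f g) f g
  have hdetU : v ((U.map (algebraMap R K)).det) = 0 := by
    rw [← RingHom.mapMatrix_apply, ← RingHom.map_det]; exact val_unit v hv0 hU
  have hdetV : v ((V.map (algebraMap R K)).det) = 0 := by
    rw [← RingHom.mapMatrix_apply, ← RingHom.map_det]; exact val_unit v hv0 hV
  have hdetD : v D.det = ((∑ j, μ j : ℤ) : WithTop ℤ) := by
    rw [hD, Matrix.det_diagonal, val_prod]
    calc ∑ j, v ((algebraMap R K π) ^ (μ j)) = ∑ j, ((μ j : ℤ) : WithTop ℤ) :=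
          Finset.sum_congr rfl fun j _ => hz (μ j)
      _ = ((∑ j, μ j : ℤ) : WithTop ℤ) := by push_cast; rfl
  have hdetA : v A.det = ((∑ j, μ j : ℤ) : WithTop ℤ) := by
    rw [hA, Matrix.det_mul, Matrix.det_mul, v.map_mul, v.map_mul, hdetU, hdetV, hdetD]
    simp
  -- D is obtained from A by multiplying by matrices over R
  have hUinv : (U⁻¹ * U) = 1 := Matrix.nonsing_inv_mul U hU
  have hVinv : (V * V⁻¹) = 1 := Matrix.mul_nonsing_inv V hV
  have hDeq : D = (U⁻¹.map (algebraMap R K)) * A * (V⁻¹.map (algebraMap R K)) := by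
    rw [hA]
    have e1 : (U⁻¹.map (algebraMap R K)) *
          (U.map (algebraMap R K) * D * V.map (algebraMap R K)) * (V⁻¹.map (algebraMap R K))
        = ((U⁻¹.map (algebraMap R K)) * (U.map (algebraMap R K))) * D *
          ((V.map (algebraMap R K)) * (V⁻¹.map (algebraMap R K))) := by
      simp only [Matrix.mul_assoc]
    rw [e1, ← Matrix.map_mul, hUinv, ← Matrix.map_mul, hVinv,
      Matrix.map_one _ (map_zero _) (map_one _), Matrix.one_mul, Matrix.mul_one]
  -- splitting sums into head and tail
  have hsplit : ∀ (x : Fin n → ℤ) (k : ℕ),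
      (∑ j ∈ Finset.univ.filter (fun j : Fin n => (j : ℕ) < k), x j) +
        (∑ j ∈ Finset.univ.filter (fun j : Fin n => k ≤ (j : ℕ)), x j) = ∑ j, x j := by
    intro x k
    have hfe : (Finset.univ.filter (fun j : Fin n => k ≤ (j : ℕ)))
        = Finset.univ.filter (fun j : Fin n => ¬ ((j : ℕ) < k)) := by
      apply Finset.filter_congr
      intro j _
      simp only [not_lt]
    rw [hfe, Finset.sum_filter_add_sum_filter_not]
  constructor
  · -- (a) → (b)
    rintro ⟨hmin, hdet⟩
    have htot : (∑ j, μ j) = ∑ j, lam j := by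
      have h := hdetA.symm.trans hdet
      exact_mod_cast h
    refine ⟨?_, htot⟩
    -- tail inequalities, in "tail starting at position k" form
    have htails : ∀ k : ℕ, k ≤ n →
        (∑ j ∈ Finset.univ.filter (fun j : Fin n => k ≤ (j : ℕ)), lam j) ≤
          (∑ j ∈ Finset.univ.filter (fun j : Fin n => k ≤ (j : ℕ)), μ j) := by
      intro k hk
      rcases Nat.eq_or_lt_of_le hk with heq | hlt
      · have hfe : (Finset.univ.filter (fun j : Fin n => k ≤ (j : ℕ))) = ∅ := by
          apply Finset.filter_false_of_mem
          intro j _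
          have := j.isLt
          omega
        rw [hfe]
        simp
      · -- use the minor of size i = n - k of D at the tail positions
        set i : ℕ := n - k with hi
        have h1i : 1 ≤ i := by omega
        have hin : i ≤ n := by omega
        have hnk : n - i = k := by omega
        have hi1 : ∀ a : Fin i, n - i + (a : ℕ) < n := fun a => by have := a.isLt; omega
        set e : Fin i → Fin n := fun a => ⟨n - i + a, hi1 a⟩ with he
        have heinj : Function.Injective e := by
          intro a b hab
          simp only [he, Fin.mk.injEq] at hab
          exact Fin.ext (by omega)
        have hsub : D.submatrix e e
            = Matrix.diagonal (fun a => (algebraMap R K π) ^ (μ (e a))) := by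
          ext a b
          by_cases hab : a = b
          · subst hab
            simp [hD, Matrix.submatrix_apply]
          · have hne : e a ≠ e b := fun h => hab (heinj h)
            simp [hD, Matrix.submatrix_apply, Matrix.diagonal_apply_ne _ hne,
              Matrix.diagonal_apply_ne _ hab]
        have hval : v ((D.submatrix e e).det)
            = ((∑ j ∈ Finset.univ.filter (fun j : Fin n => n - i ≤ (j : ℕ)), μ j : ℤ) :
                WithTop ℤ) := by
          rw [hsub, Matrix.det_diagonal, val_prod]
          calc ∑ a, v ((algebraMap R K π) ^ (μ (e a)))
              = ∑ a, ((μ (e a) : ℤ) : WithTop ℤ) := Finset.sum_congr rfl fun a _ => hz _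
            _ = ((∑ a, μ (e a) : ℤ) : WithTop ℤ) := by push_cast; rfl
            _ = _ := by rw [tail_sum_eq hin μ]
        have hge : ((∑ j ∈ Finset.univ.filter (fun j : Fin n => n - i ≤ (j : ℕ)), lam j : ℤ) :
            WithTop ℤ) ≤ v ((D.submatrix e e).det) := by
          rw [hDeq, Matrix.mul_assoc]
          exact left_mul_bound v hv0 U⁻¹ _ _
            (fun f g => right_mul_bound v hv0 V⁻¹ A _
              (fun f g => hmin i h1i hin f g) f g) e e
        rw [hval] at hge
        have hge' : (∑ j ∈ Finset.univ.filter (fun j : Fin n => n - i ≤ (j : ℕ)), lam j) ≤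
            (∑ j ∈ Finset.univ.filter (fun j : Fin n => n - i ≤ (j : ℕ)), μ j) := by
          exact_mod_cast hge
        rw [hnk] at hge'
        exact hge'
    intro i h1i hin
    have h2 := hsplit μ i
    have h3 := hsplit lam i
    have h4 := htails i hin
    omega
  · -- (b) → (a)
    rintro ⟨hdom, htot⟩
    have htails : ∀ i : ℕ, i ≤ n →
        (∑ j ∈ Finset.univ.filter (fun j : Fin n => n - i ≤ (j : ℕ)), lam j) ≤
          (∑ j ∈ Finset.univ.filter (fun j : Fin n => n - i ≤ (j : ℕ)), μ j) := by
      intro i hin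
      have h2 := hsplit μ (n - i)
      have h3 := hsplit lam (n - i)
      have h4 : (∑ j ∈ Finset.univ.filter (fun j : Fin n => (j : ℕ) < n - i), μ j) ≤
          (∑ j ∈ Finset.univ.filter (fun j : Fin n => (j : ℕ) < n - i), lam j) := by
        rcases Nat.eq_zero_or_pos (n - i) with h0 | hpos
        · rw [h0]
          have hfe : (Finset.univ.filter (fun j : Fin n => (j : ℕ) < 0)) = ∅ := by
            apply Finset.filter_false_of_mem
            intro j _
            omega
          rw [hfe]
          simp
        · exact hdom (n - i) hpos (Nat.sub_le n i)
      omega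
    refine ⟨?_, by rw [hdetA, htot]⟩
    intro i h1i hin f g
    refine le_trans ?_ (hAminor i hin f g)
    exact_mod_cast htails i hin
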